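/- arXiv:2410.04083 — 2 statements merged into one kernel-verified Lean document; each statement's English description precedes it below -/
import Mathlib

section
/- Let μ > 0, L₂ > 0, let f : E → ℝ be μ-strongly star-convex with respect to a global minimizer x* and have L₂-Lipschitz-continuous second derivative, let M₂ ≥ L₂, let x₀ ∈ E, and let D > 0 satisfy ‖x − x*‖ ≤ D whenever f(x) ≤ f(x₀). Let (x_t) be generated by Cubic Regularized Newton steps: for each t, x_{t+1} is a global minimizer of the cubic model Ω_{x_t,M₂}. Then for all t ≥ 0, f(x_t) − f(x*) ≤ (1 − α^{low})^t · (f(x₀) − f(x*)), where α^{low} = min{ 1/2, √(3μ/(4(M₂+L₂)D)) }. -/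
open scoped RealInnerProductSpace

section
variable {E : Type*} [NormedAddCommGroup E] [InnerProductSpace ℝ E]

/-- `f` is `μ`-uniformly star-convex of degree `q` with respect to `xs`. -/
def UniformlyStarConvex (f : E → ℝ) (xs : E) (q : ℕ) (μ : ℝ) : Prop :=
  ∀ x : E, ∀ α : ℝ, 0 ≤ α → α ≤ 1 →
    f (α • x + (1 - α) • xs) ≤
      α * f x + (1 - α) * f xs - α * (1 - α) * μ / q * ‖x - xs‖ ^ q

/-- `f` has `L`-Lipschitz-continuous `p`-th derivative. -/
def HasLipschitzDeriv (f : E → ℝ) (p : ℕ) (L : ℝ) : Prop :=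
  ContDiff ℝ p f ∧
    ∀ x y : E, ‖iteratedFDeriv ℝ p f x - iteratedFDeriv ℝ p f y‖ ≤ L * ‖x - y‖

/-- The `p`-th order Taylor polynomial `Φ_{x,p}(y)` of `f` at `x`. -/
noncomputable def taylorPoly (f : E → ℝ) (p : ℕ) (x y : E) : ℝ :=
  f x + ∑ k ∈ Finset.Icc 1 p,
    (1 / (Nat.factorial k : ℝ)) * iteratedFDeriv ℝ k f x (fun _ => y - x)

/-- The tensor model `Ω_{x,M}(y)`. -/
noncomputable def tensorModel (f : E → ℝ) (p : ℕ) (M : ℝ) (x y : E) : ℝ :=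
  taylorPoly f p x y + M / (Nat.factorial (p + 1) : ℝ) * ‖y - x‖ ^ (p + 1)

/-- `xp` is a basic `p`-th order tensor step from `x` with parameter `M`
(a global minimizer of the model). -/
def IsTensorStep (f : E → ℝ) (p : ℕ) (M : ℝ) (x xp : E) : Prop :=
  ∀ y : E, tensorModel f p M x xp ≤ tensorModel f p M x y

end

section aux
variable {E : Type*} [NormedAddCommGroup E] [InnerProductSpace ℝ E]

private lemma taylorPoly_two' (f : E → ℝ) (x y : E) :
    taylorPoly f 2 x y = f x + fderiv ℝ f x (y - x)
      + (1/2) * fderiv ℝ (fderiv ℝ f) x (y - x) (y - x) := by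
  have : Finset.Icc 1 2 = ({1, 2} : Finset ℕ) := by decide
  rw [taylorPoly, this, Finset.sum_pair (by norm_num)]
  rw [show iteratedFDeriv ℝ 1 f x (fun _ => y - x) = fderiv ℝ f x (y - x) from
    iteratedFDeriv_one_apply _,
    iteratedFDeriv_two_apply f x (fun _ => y - x)]
  norm_num [Nat.factorial]
  ring

private lemma taylor2_upper (f : E → ℝ) (L : ℝ)
    (hf : ContDiff ℝ 2 f)
    (hlip : ∀ z w : E, ‖iteratedFDeriv ℝ 2 f z - iteratedFDeriv ℝ 2 f w‖ ≤ L * ‖z - w‖)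
    (x y : E) :
    f y ≤ taylorPoly f 2 x y + L / 6 * ‖y - x‖ ^ 3 := by
  set h := y - x with hh
  have hdf : Differentiable ℝ f := hf.differentiable (by norm_num)
  have hdf' : Differentiable ℝ (fderiv ℝ f) :=
    (hf.fderiv_right (m := 1) (by norm_num)).differentiable (by norm_num)
  set φ : ℝ → ℝ := fun t => f (x + t • h) with hφdef
  set ψ : ℝ → ℝ := fun t => fderiv ℝ f (x + t • h) h with hψdef
  set χ : ℝ → ℝ := fun t => fderiv ℝ (fderiv ℝ f) (x + t • h) h h with hχdef
  have hline : ∀ t : ℝ, HasDerivAt (fun s : ℝ => x + s • h) h t := by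
    intro t
    simpa using ((hasDerivAt_id t).smul_const h).const_add x
  have hφ : ∀ t, HasDerivAt φ (ψ t) t := fun t =>
    (hdf _).hasFDerivAt.comp_hasDerivAt t (hline t)
  have hψ : ∀ t, HasDerivAt ψ (χ t) t := by
    intro t
    have h1 : HasFDerivAt (fun z => fderiv ℝ f z h)
        (((fderiv ℝ f (x + t • h)).comp (0 : E →L[ℝ] E))
          + (fderiv ℝ (fderiv ℝ f) (x + t • h)).flip h) (x + t • h) :=
      (hdf' _).hasFDerivAt.clm_apply (hasFDerivAt_const h _)
    have h2 := h1.comp_hasDerivAt t (hline t)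
    simp at h2; exact h2
  have hχlip : ∀ s t : ℝ, |χ s - χ t| ≤ L * ‖h‖ ^ 3 * |s - t| := by
    intro s t
    have happ : χ s - χ t
        = (iteratedFDeriv ℝ 2 f (x + s • h) - iteratedFDeriv ℝ 2 f (x + t • h))
            (fun _ => h) := by
      simp [ContinuousMultilinearMap.sub_apply, iteratedFDeriv_two_apply, hχdef]
    have hb := (iteratedFDeriv ℝ 2 f (x + s • h)
        - iteratedFDeriv ℝ 2 f (x + t • h)).le_opNorm (fun _ => h)
    rw [happ]
    have hprod : (∏ _i : Fin 2, ‖h‖) = ‖h‖ ^ 2 := by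
      simp [Finset.prod_const]
    calc |(iteratedFDeriv ℝ 2 f (x + s • h) - iteratedFDeriv ℝ 2 f (x + t • h)) (fun _ => h)|
        ≤ ‖iteratedFDeriv ℝ 2 f (x + s • h) - iteratedFDeriv ℝ 2 f (x + t • h)‖ * ‖h‖ ^ 2 := by
          simpa [hprod] using hb
      _ ≤ (L * ‖x + s • h - (x + t • h)‖) * ‖h‖ ^ 2 := by
          exact mul_le_mul_of_nonneg_right (hlip _ _) (by positivity)
      _ = L * ‖h‖ ^ 3 * |s - t| := by
          rw [show x + s • h - (x + t • h) = (s - t) • h by module, norm_smul]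
          simp [Real.norm_eq_abs]
          ring
  set G : ℝ → ℝ := fun t => ψ t - ψ 0 - t * χ 0 - L * ‖h‖ ^ 3 * t ^ 2 / 2 with hGdef
  have hG : ∀ t, HasDerivAt G (χ t - χ 0 - L * ‖h‖ ^ 3 * t) t := by
    intro t
    have : HasDerivAt G (χ t - (1 * χ 0) - L * ‖h‖ ^ 3 * (2 * t ^ 1) / 2) t := by
      exact (((hψ t).sub_const (ψ 0)).sub ((hasDerivAt_id t).mul_const (χ 0))).sub
        ((((hasDerivAt_pow 2 t)).const_mul (L * ‖h‖ ^ 3)).div_const 2)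
    convert this using 1; ring
  have hGneg : ∀ t ∈ Set.Icc (0:ℝ) 1, G t ≤ 0 := by
    intro t ht
    have hanti : AntitoneOn G (Set.Icc (0:ℝ) 1) := by
      apply antitoneOn_of_deriv_nonpos (convex_Icc 0 1)
      · exact fun s _ => (hG s).continuousAt.continuousWithinAt
      · exact fun s _ => ((hG s).differentiableAt).differentiableWithinAt
      · intro s hs
        rw [interior_Icc] at hs
        rw [(hG s).deriv]
        have h1 : χ s - χ 0 ≤ L * ‖h‖ ^ 3 * s := by
          have := hχlip s 0
          rw [sub_zero, abs_of_pos hs.1] at this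
          exact (le_abs_self _).trans this
        linarith
    have h0 : G 0 = 0 := by simp [hGdef]
    have := hanti (Set.left_mem_Icc.2 zero_le_one) ht ht.1
    simpa [h0] using this
  set F : ℝ → ℝ := fun t => φ t - φ 0 - t * ψ 0 - t ^ 2 / 2 * χ 0
      - L * ‖h‖ ^ 3 * t ^ 3 / 6 with hFdef
  have hF : ∀ t, HasDerivAt F (G t) t := by
    intro t
    have : HasDerivAt F (ψ t - (1 * ψ 0) - (2 * t ^ 1) / 2 * χ 0
        - L * ‖h‖ ^ 3 * (3 * t ^ 2) / 6) t := by
      exact ((((hφ t).sub_const (φ 0)).sub ((hasDerivAt_id t).mul_const (ψ 0))).sub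
        (((hasDerivAt_pow 2 t).div_const 2).mul_const (χ 0))).sub
        (((hasDerivAt_pow 3 t).const_mul (L * ‖h‖ ^ 3)).div_const 6)
    convert this using 1
    simp [hGdef]; ring
  have hFneg : F 1 ≤ 0 := by
    have hanti : AntitoneOn F (Set.Icc (0:ℝ) 1) := by
      apply antitoneOn_of_deriv_nonpos (convex_Icc 0 1)
      · exact fun s _ => (hF s).continuousAt.continuousWithinAt
      · exact fun s _ => ((hF s).differentiableAt).differentiableWithinAt
      · intro s hs
        rw [interior_Icc] at hs
        rw [(hF s).deriv]
        exact hGneg s ⟨hs.1.le, hs.2.le⟩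
    have h0 : F 0 = 0 := by simp [hFdef]
    have := hanti (Set.left_mem_Icc.2 zero_le_one) (Set.right_mem_Icc.2 zero_le_one)
      zero_le_one
    simpa [h0] using this
  have hφ1 : φ 1 = f y := by simp [hφdef, hh]
  have hφ0 : φ 0 = f x := by simp [hφdef]
  have hψ0 : ψ 0 = fderiv ℝ f x h := by simp [hψdef]
  have hχ0 : χ 0 = fderiv ℝ (fderiv ℝ f) x h h := by simp [hχdef]
  rw [taylorPoly_two']
  have := hFneg
  simp only [hFdef, hφ1, hφ0, hψ0, hχ0, one_pow, one_mul] at this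
  linarith

private lemma taylorPoly_neg' (f : E → ℝ) (x y : E) :
    taylorPoly (-f) 2 x y = -taylorPoly f 2 x y := by
  unfold taylorPoly
  simp only [Pi.neg_apply, iteratedFDeriv_neg_apply, ContinuousMultilinearMap.neg_apply,
    mul_neg, Finset.sum_neg_distrib]
  ring

private lemma taylor2_lower (f : E → ℝ) (L : ℝ)
    (hf : ContDiff ℝ 2 f)
    (hlip : ∀ z w : E, ‖iteratedFDeriv ℝ 2 f z - iteratedFDeriv ℝ 2 f w‖ ≤ L * ‖z - w‖)
    (x y : E) :
    taylorPoly f 2 x y ≤ f y + L / 6 * ‖y - x‖ ^ 3 := by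
  have hlip' : ∀ z w : E, ‖iteratedFDeriv ℝ 2 (-f) z - iteratedFDeriv ℝ 2 (-f) w‖
      ≤ L * ‖z - w‖ := by
    intro z w
    simp only [iteratedFDeriv_neg_apply]
    rw [show -iteratedFDeriv ℝ 2 f z - -iteratedFDeriv ℝ 2 f w
      = -(iteratedFDeriv ℝ 2 f z - iteratedFDeriv ℝ 2 f w) by abel, norm_neg]
    exact hlip z w
  have := taylor2_upper (-f) L hf.neg hlip' x y
  rw [taylorPoly_neg'] at this
  simp only [Pi.neg_apply] at this
  linarith

private lemma taylorPoly_self' (f : E → ℝ) (x : E) : taylorPoly f 2 x x = f x := by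
  unfold taylorPoly
  have : ∀ k ∈ Finset.Icc 1 2,
      (1 / (Nat.factorial k : ℝ)) * iteratedFDeriv ℝ k f x (fun _ => x - x) = 0 := by
    intro k hk
    rw [Finset.mem_Icc] at hk
    have h0 : (fun _ : Fin k => x - x) = fun _ : Fin k => (0 : E) := by simp
    rw [h0, (iteratedFDeriv ℝ k f x).map_coord_zero (⟨0, hk.1⟩ : Fin k) rfl]
    ring
  rw [Finset.sum_congr rfl this]
  simp

end aux

theorem cubic_newton_linear_rate {E : Type*} [NormedAddCommGroup E]
    [InnerProductSpace ℝ E] [FiniteDimensional ℝ E]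
    (f : E → ℝ) (xs : E) (μ L M D : ℝ)
    (hμ : 0 < μ) (hL : 0 < L) (hM : L ≤ M) (hD : 0 < D)
    (hmin : ∀ y : E, f xs ≤ f y)
    (hsc : UniformlyStarConvex f xs 2 μ)
    (hf : HasLipschitzDeriv f 2 L)
    (x : ℕ → E)
    (hlev : ∀ z : E, f z ≤ f (x 0) → ‖z - xs‖ ≤ D)
    (hstep : ∀ t : ℕ, IsTensorStep f 2 M (x t) (x (t + 1))) :
    ∀ t : ℕ, f (x t) - f xs ≤
      (1 - min (1 / 2) (Real.sqrt (3 * μ / (4 * (M + L) * D)))) ^ t * (f (x 0) - f xs) := by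
  obtain ⟨hC2, hlip⟩ := hf
  have hC2' : ContDiff ℝ 2 f := hC2
  set α := min (1/2 : ℝ) (Real.sqrt (3 * μ / (4 * (M + L) * D))) with hαdef
  have hα0 : 0 ≤ α := le_min (by norm_num) (Real.sqrt_nonneg _)
  have hαhalf : α ≤ 1/2 := min_le_left _ _
  have hα1 : α ≤ 1 := hαhalf.trans (by norm_num)
  have hML : 0 < M + L := by linarith
  have hαsq : α ^ 2 * (4 * (M + L) * D) ≤ 3 * μ := by
    have h1 : α ≤ Real.sqrt (3 * μ / (4 * (M + L) * D)) := min_le_right _ _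
    have h2 : α ^ 2 ≤ 3 * μ / (4 * (M + L) * D) := by
      calc α ^ 2 ≤ (Real.sqrt (3 * μ / (4 * (M + L) * D))) ^ 2 :=
            pow_le_pow_left₀ hα0 h1 2
        _ = 3 * μ / (4 * (M + L) * D) := Real.sq_sqrt (by positivity)
    exact (le_div_iff₀ (by positivity)).mp h2
  have hfact : ((Nat.factorial (2 + 1) : ℕ) : ℝ) = 6 := by norm_num [Nat.factorial]
  -- key one-step decrease
  have key : ∀ t : ℕ, f (x t) ≤ f (x 0) →
      f (x (t + 1)) - f xs ≤ (1 - α) * (f (x t) - f xs) := by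
    intro t hle
    set z := x t
    set z' := x (t + 1)
    set r := ‖z - xs‖ with hrdef
    have hr0 : 0 ≤ r := norm_nonneg _
    have hrD : r ≤ D := hlev z hle
    -- the comparison point
    set y := (1 - α) • z + α • xs with hydef
    have hsc' := hsc z (1 - α) (by linarith) (by linarith)
    rw [show (1:ℝ) - (1 - α) = α by ring] at hsc'
    push_cast at hsc'
    have hfy : f y ≤ (1 - α) * f z + α * f xs - (1 - α) * α * μ / 2 * r ^ 2 := hsc'
    have hyz : ‖y - z‖ = α * r := by
      rw [show y - z = α • (xs - z) by rw [hydef]; module, norm_smul, Real.norm_eq_abs,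
        abs_of_nonneg hα0, show ‖xs - z‖ = r by rw [hrdef, norm_sub_rev]]
    have hA1 : f z' ≤ tensorModel f 2 M z z' := by
      have := taylor2_upper f L hC2' hlip z z'
      rw [tensorModel, hfact]
      have hnn : (0:ℝ) ≤ ‖z' - z‖ ^ (2 + 1) := by positivity
      have : f z' ≤ taylorPoly f 2 z z' + L / 6 * ‖z' - z‖ ^ 3 := this
      have hLM : L / 6 * ‖z' - z‖ ^ 3 ≤ M / 6 * ‖z' - z‖ ^ 3 := by
        apply mul_le_mul_of_nonneg_right _ (by positivity)
        linarith
      calc f z' ≤ taylorPoly f 2 z z' + L / 6 * ‖z' - z‖ ^ 3 := this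
        _ ≤ taylorPoly f 2 z z' + M / 6 * ‖z' - z‖ ^ (2 + 1) := by
            norm_num; linarith [hLM]
    have hA2 : tensorModel f 2 M z z' ≤ tensorModel f 2 M z y := hstep t y
    have hA3 : tensorModel f 2 M z y ≤ f y + (M + L) / 6 * (α * r) ^ 3 := by
      have hl := taylor2_lower f L hC2' hlip z y
      rw [tensorModel, hfact, hyz] at *
      rw [hyz] at hl
      calc taylorPoly f 2 z y + M / 6 * (α * r) ^ (2 + 1)
          ≤ (f y + L / 6 * (α * r) ^ 3) + M / 6 * (α * r) ^ 3 := by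
            norm_num; linarith [hl]
        _ = f y + (M + L) / 6 * (α * r) ^ 3 := by ring
    have hA6 : (M + L) / 6 * (α * r) ^ 3 ≤ (1 - α) * α * μ / 2 * r ^ 2 := by
      have h6 : (M + L) * α ^ 2 * r ≤ 3 * μ / 4 := by
        nlinarith [mul_le_mul_of_nonneg_left hrD
          (by positivity : (0:ℝ) ≤ 4 * (M + L) * α ^ 2)]
      have hc : α * r ^ 2 / 6 * ((M + L) * α ^ 2 * r) ≤ α * r ^ 2 / 6 * (3 * μ / 4) :=
        mul_le_mul_of_nonneg_left h6 (by positivity)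
      nlinarith [hc, mul_nonneg (mul_nonneg hα0 hμ.le) (sq_nonneg r),
        mul_nonneg (mul_nonneg (mul_nonneg hα0 hμ.le) (sq_nonneg r))
          (by linarith : (0:ℝ) ≤ 1/2 - α)]
    calc f z' - f xs ≤ tensorModel f 2 M z z' - f xs := by linarith
      _ ≤ tensorModel f 2 M z y - f xs := by linarith
      _ ≤ f y + (M + L) / 6 * (α * r) ^ 3 - f xs := by linarith
      _ ≤ ((1 - α) * f z + α * f xs - (1 - α) * α * μ / 2 * r ^ 2)
            + (1 - α) * α * μ / 2 * r ^ 2 - f xs := by linarith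
      _ = (1 - α) * (f z - f xs) := by ring
  -- induction
  intro t
  induction t with
  | zero => simp
  | succ t ih =>
    have hmono : f (x t) ≤ f (x 0) := by
      have h1 : 0 ≤ f (x t) - f xs := by linarith [hmin (x t)]
      have h2 : (1 - α) ^ t * (f (x 0) - f xs) ≤ f (x 0) - f xs := by
        have h3 : (1 - α) ^ t ≤ 1 := pow_le_one₀ (by linarith) (by linarith)
        have h4 : 0 ≤ f (x 0) - f xs := by linarith [hmin (x 0)]
        nlinarith
      linarith
    have hk := key t hmono
    calc f (x (t + 1)) - f xs ≤ (1 - α) * (f (x t) - f xs) := hk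
      _ ≤ (1 - α) * ((1 - α) ^ t * (f (x 0) - f xs)) :=
          mul_le_mul_of_nonneg_left ih (by linarith)
      _ = (1 - α) ^ (t + 1) * (f (x 0) - f xs) := by ring
end

section
/- Let μ > 0, L₂ > 0, let f : E → ℝ be μ-strongly star-convex with respect to a global minimizer x* with f(x₀) > f(x*), have L₂-Lipschitz-continuous second derivative, let M₂ ≥ L₂, and let D > 0 satisfy ‖x − x*‖ ≤ D whenever f(x) ≤ f(x₀). Let (x_t) be generated by Cubic Regularized Newton steps (x_{t+1} a global minimizer of Ω_{x_t,M₂}). Set α^{low} = min{1/2, √(3μ/(4(M₂+L₂)D))}, κ_t^{sl} = ((M₂+L₂)·√2/(3μ^{3/2}))·(1−α^{low})^{t/2}·(f(x₀) − f(x*))^{1/2}, and α_t^{sl} = (−1 + √(1 + 4κ_t^{sl}))/(2κ_t^{sl}). Then: (i) for every t ≥ 0, f(x_{t+1}) − f(x*) ≤ (1 − α_t^{sl})·(f(x_t) − f(x*)); (ii) the contraction factors improve at each step: α_t^{sl} < α_{t+1}^{sl} < 1 for all t (global superlinear convergence); and (iii) for every T ≥ 1, f(x_T) − f(x*) ≤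 (f(x₀) − f(x*))·∏_{t=0}^{T−1} (1 − α_t^{sl}). -/
open scoped RealInnerProductSpace

section helpers


open intervalIntegral in
lemma integral_bound_aux {φ ψ : ℝ → ℝ} {C : ℝ} {n : ℕ}
    (hφ : ∀ t ∈ Set.Icc (0:ℝ) 1, HasDerivAt φ (ψ t) t)
    (hc : Continuous ψ)
    (hb : ∀ t ∈ Set.Icc (0:ℝ) 1, |ψ t| ≤ C * t ^ n)
    {s : ℝ} (hs : s ∈ Set.Icc (0:ℝ) 1) :
    |φ s - φ 0| ≤ C * s ^ (n+1) / (n+1) := by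
  obtain ⟨hs0, hs1⟩ := hs
  have huIcc : Set.uIcc (0:ℝ) s ⊆ Set.Icc 0 1 := by
    rw [Set.uIcc_of_le hs0]; exact Set.Icc_subset_Icc le_rfl hs1
  have hftc : ∫ t in (0:ℝ)..s, ψ t = φ s - φ 0 :=
    intervalIntegral.integral_eq_sub_of_hasDerivAt (fun t ht => hφ t (huIcc ht))
      (hc.intervalIntegrable 0 s)
  rw [← hftc]
  have h1 : |∫ t in (0:ℝ)..s, ψ t| ≤ ∫ t in (0:ℝ)..s, |ψ t| := by
    simpa [Real.norm_eq_abs] using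
      intervalIntegral.norm_integral_le_integral_norm (f := ψ) (μ := MeasureTheory.volume) hs0
  refine h1.trans ?_
  have h2 : (∫ t in (0:ℝ)..s, |ψ t|) ≤ ∫ t in (0:ℝ)..s, C * t ^ n := by
    apply intervalIntegral.integral_mono_on hs0 (hc.abs.intervalIntegrable 0 s)
      ((continuous_const.mul (continuous_pow n)).intervalIntegrable 0 s)
    intro t ht; exact hb t ⟨ht.1, ht.2.trans hs1⟩
  refine h2.trans_eq ?_
  rw [intervalIntegral.integral_const_mul, integral_pow]
  ring

variable {E : Type*} [NormedAddCommGroup E] [InnerProductSpace ℝ E]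

lemma taylor_bound {f : E → ℝ} {L : ℝ} (hf : HasLipschitzDeriv f 2 L) (x y : E) :
    |f y - taylorPoly f 2 x y| ≤ L / 6 * ‖y - x‖ ^ 3 := by
  obtain ⟨hf2, hlip⟩ := hf
  set h : E := y - x with hh
  have hdf : Differentiable ℝ f := hf2.differentiable (by norm_num)
  have hcd1 : ContDiff ℝ 1 (fderiv ℝ f) := by
    have := hf2.fderiv_right (m := 1) (by norm_num)
    exact this
  have hdf1 : Differentiable ℝ (fderiv ℝ f) := hcd1.differentiable (by norm_num)
  have hf2cont : Continuous (fderiv ℝ (fderiv ℝ f)) := hcd1.continuous_fderiv (by norm_num)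
  -- the line γ
  have hγ : ∀ t : ℝ, HasDerivAt (fun s : ℝ => x + s • h) h t := by
    intro t
    simpa using ((hasDerivAt_id t).smul_const h).const_add x
  set g' : ℝ → ℝ := fun t => fderiv ℝ f (x + t • h) h with hg'def
  set g'' : ℝ → ℝ := fun t => fderiv ℝ (fderiv ℝ f) (x + t • h) h h with hg''def
  have hg' : ∀ t : ℝ, HasDerivAt (fun s : ℝ => f (x + s • h)) (g' t) t := by
    intro t
    exact (hdf.differentiableAt.hasFDerivAt).comp_hasDerivAt t (hγ t)
  have hg'' : ∀ t : ℝ, HasDerivAt g' (g'' t) t := by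
    intro t
    have h1 : HasDerivAt (fun s : ℝ => fderiv ℝ f (x + s • h))
        (fderiv ℝ (fderiv ℝ f) (x + t • h) h) t :=
      (hdf1.differentiableAt.hasFDerivAt).comp_hasDerivAt t (hγ t)
    simpa using h1.clm_apply (hasDerivAt_const t h)
  have hcont'' : Continuous g'' := by
    have hline : Continuous fun t : ℝ => x + t • h :=
      continuous_const.add (continuous_id.smul continuous_const)
    exact ((hf2cont.comp hline).clm_apply continuous_const).clm_apply continuous_const
  -- Lipschitz bound on g''
  have hlipg : ∀ t ∈ Set.Icc (0:ℝ) 1, |g'' t - g'' 0| ≤ (L * ‖h‖ ^ 3) * t ^ 1 := by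
    intro t ht
    have e1 : g'' t = iteratedFDeriv ℝ 2 f (x + t • h) (fun _ => h) := by
      rw [iteratedFDeriv_two_apply]
    have e0 : g'' 0 = iteratedFDeriv ℝ 2 f x (fun _ => h) := by
      rw [iteratedFDeriv_two_apply]; simp [hg''def]
    rw [e1, e0]
    have := (iteratedFDeriv ℝ 2 f (x + t • h) - iteratedFDeriv ℝ 2 f x).le_opNorm
      (fun _ => h)
    simp only [ContinuousMultilinearMap.sub_apply] at this
    have hnorm := hlip (x + t • h) x
    have harg : ‖x + t • h - x‖ = t * ‖h‖ := by
      simp [norm_smul, Real.norm_eq_abs, abs_of_nonneg ht.1]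
    calc |iteratedFDeriv ℝ 2 f (x + t • h) (fun _ => h) - iteratedFDeriv ℝ 2 f x (fun _ => h)|
        ≤ ‖iteratedFDeriv ℝ 2 f (x + t • h) - iteratedFDeriv ℝ 2 f x‖ * ∏ _i : Fin 2, ‖h‖ := this
      _ ≤ (L * (t * ‖h‖)) * ∏ _i : Fin 2, ‖h‖ := by
          apply mul_le_mul_of_nonneg_right _ (by positivity)
          rw [← harg]; exact hnorm
      _ = (L * ‖h‖ ^ 3) * t ^ 1 := by simp; ring
  set C := L * ‖h‖ ^ 3 with hC
  -- first integration
  have step1 : ∀ s ∈ Set.Icc (0:ℝ) 1, |g' s - g' 0 - s * g'' 0| ≤ C / 2 * s ^ 2 := by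
    intro s hs
    have hd : ∀ t ∈ Set.Icc (0:ℝ) 1,
        HasDerivAt (fun t => g' t - g' 0 - t * g'' 0) (g'' t - g'' 0) t := by
      intro t _
      exact ((hg'' t).sub_const (g' 0)).sub (hasDerivAt_mul_const (g'' 0))
    have := integral_bound_aux hd (hcont''.sub continuous_const) hlipg hs
    simpa using this.trans_eq (by push_cast; ring)
  -- second integration
  have hd2 : ∀ t ∈ Set.Icc (0:ℝ) 1,
      HasDerivAt (fun t => f (x + t • h) - f x - t * g' 0 - t ^ 2 * (g'' 0 / 2))
        (g' t - g' 0 - t * g'' 0) t := by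
    intro t _
    have := (((hg' t).sub_const (f x)).sub (hasDerivAt_mul_const (g' 0))).sub
      ((hasDerivAt_pow 2 t).mul_const (g'' 0 / 2))
    have e : g' t - g' 0 - ((2:ℕ):ℝ) * t ^ (2 - 1) * (g'' 0 / 2) = g' t - g' 0 - t * g'' 0 := by
      rw [show (2:ℕ) - 1 = 1 from rfl]; push_cast; ring
    rw [e] at this
    exact this
  have hcont2 : Continuous fun t => g' t - g' 0 - t * g'' 0 := by
    have hgc : Continuous g' := by
      have hline : Continuous fun t : ℝ => x + t • h :=
        continuous_const.add (continuous_id.smul continuous_const)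
      exact ((hcd1.continuous.comp hline).clm_apply continuous_const)
    exact (hgc.sub continuous_const).sub (continuous_id.mul continuous_const)
  have hb2 : ∀ t ∈ Set.Icc (0:ℝ) 1, |g' t - g' 0 - t * g'' 0| ≤ (C / 2) * t ^ 2 :=
    step1
  have final := integral_bound_aux hd2 hcont2 hb2 (Set.mem_Icc.mpr ⟨zero_le_one, le_rfl⟩)
  -- identify with taylorPoly
  have hIcc : Finset.Icc 1 2 = ({1, 2} : Finset ℕ) := by decide
  have e0 : x + (0:ℝ) • h = x := by simp
  have htp : taylorPoly f 2 x y = f x + g' 0 + g'' 0 / 2 := by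
    rw [taylorPoly, hIcc, Finset.sum_insert (by decide), Finset.sum_singleton,
      iteratedFDeriv_one_apply, iteratedFDeriv_two_apply]
    simp only [hg'def, hg''def, e0, ← hh]
    norm_num [Nat.factorial]
    ring
  have hy : x + (1:ℝ) • h = y := by simp [hh]
  rw [htp]
  rw [hy, e0] at final
  have heq : f y - (f x + g' 0 + g'' 0 / 2)
      = f y - f x - 1 * g' 0 - 1 ^ 2 * (g'' 0 / 2)
        - (f x - f x - 0 * g' 0 - 0 ^ 2 * (g'' 0 / 2)) := by ring
  rw [heq]
  refine final.trans_eq ?_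
  rw [hC]; push_cast; ring

lemma step_bound {f : E → ℝ} {L M : ℝ} (hf : HasLipschitzDeriv f 2 L) (hM : L ≤ M)
    {x xp : E} (hs : IsTensorStep f 2 M x xp) (y : E) :
    f xp ≤ f y + (M + L) / 6 * ‖y - x‖ ^ 3 := by
  have h1 := abs_le.mp (taylor_bound hf x xp)
  have h2 := abs_le.mp (taylor_bound hf x y)
  have h3 := hs y
  have hfact : ((Nat.factorial (2 + 1) : ℕ) : ℝ) = 6 := by norm_num [Nat.factorial]
  rw [tensorModel, tensorModel, hfact] at h3
  have hp1 : (0:ℝ) ≤ ‖xp - x‖ ^ 3 := by positivity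
  have hp2 : (0:ℝ) ≤ ‖y - x‖ ^ 3 := by positivity
  nlinarith [h1.1, h1.2, h2.1, h2.2]

lemma quad_growth {f : E → ℝ} {xs : E} {μ : ℝ}
    (hsc : UniformlyStarConvex f xs 2 μ) (hmin : ∀ y : E, f xs ≤ f y) (z : E) :
    μ / 2 * ‖z - xs‖ ^ 2 ≤ f z - f xs := by
  have key : ∀ n : ℕ, (1 - 1 / (n + 1 : ℝ)) * (μ / 2 * ‖z - xs‖ ^ 2) ≤ f z - f xs := by
    intro n
    set α : ℝ := 1 / (n + 1 : ℝ) with hα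
    have hα0 : 0 < α := by positivity
    have hα1 : α ≤ 1 := by
      rw [hα]; rw [div_le_one (by positivity)]; linarith [Nat.cast_nonneg (α := ℝ) n]
    have h := hsc z α hα0.le hα1
    have h2 := hmin (α • z + (1 - α) • xs)
    have hq : ((2 : ℕ) : ℝ) = 2 := by norm_num
    rw [hq] at h
    have hmul : α * ((1 - α) * (μ / 2 * ‖z - xs‖ ^ 2)) ≤ α * (f z - f xs) := by nlinarith
    exact (mul_le_mul_iff_right₀ hα0).mp hmul
  have tend : Filter.Tendsto (fun n : ℕ => (1 - 1 / (n + 1 : ℝ)) * (μ / 2 * ‖z - xs‖ ^ 2))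
      Filter.atTop (nhds (μ / 2 * ‖z - xs‖ ^ 2)) := by
    have h0 : Filter.Tendsto (fun n : ℕ => 1 / (n + 1 : ℝ)) Filter.atTop (nhds 0) :=
      tendsto_one_div_add_atTop_nhds_zero_nat
    have h1 : Filter.Tendsto (fun n : ℕ => (1 - 1 / (n + 1 : ℝ))) Filter.atTop (nhds 1) := by
      have := (tendsto_const_nhds (α := ℕ) (f := Filter.atTop) (x := (1:ℝ))).sub h0
      simpa using this
    have := h1.mul (tendsto_const_nhds (α := ℕ) (f := Filter.atTop) (x := μ / 2 * ‖z - xs‖ ^ 2))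
    simpa using this
  exact le_of_tendsto tend (Filter.Eventually.of_forall key)

end helpers

set_option maxHeartbeats 2000000 in
theorem cubic_newton_global_superlinear {E : Type*} [NormedAddCommGroup E]
    [InnerProductSpace ℝ E] [FiniteDimensional ℝ E]
    (f : E → ℝ) (xs : E) (μ L M D : ℝ)
    (hμ : 0 < μ) (hL : 0 < L) (hM : L ≤ M) (hD : 0 < D)
    (hmin : ∀ y : E, f xs ≤ f y)
    (hsc : UniformlyStarConvex f xs 2 μ)
    (hf : HasLipschitzDeriv f 2 L)
    (x : ℕ → E)
    (hgap : f xs < f (x 0))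
    (hlev : ∀ z : E, f z ≤ f (x 0) → ‖z - xs‖ ≤ D)
    (hstep : ∀ t : ℕ, IsTensorStep f 2 M (x t) (x (t + 1)))
    (αlow : ℝ)
    (hαlow : αlow = min (1 / 2) (Real.sqrt (3 * μ / (4 * (M + L) * D))))
    (κ : ℕ → ℝ)
    (hκ : ∀ t : ℕ, κ t = (M + L) * Real.sqrt 2 / (3 * μ ^ ((3 : ℝ) / 2)) *
      (1 - αlow) ^ ((t : ℝ) / 2) * (f (x 0) - f xs) ^ ((1 : ℝ) / 2))
    (αsl : ℕ → ℝ)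
    (hαsl : ∀ t : ℕ, αsl t = (-1 + Real.sqrt (1 + 4 * κ t)) / (2 * κ t)) :
    (∀ t : ℕ, f (x (t + 1)) - f xs ≤ (1 - αsl t) * (f (x t) - f xs)) ∧
      (∀ t : ℕ, αsl t < αsl (t + 1) ∧ αsl (t + 1) < 1) ∧
      (∀ T : ℕ, 1 ≤ T →
        f (x T) - f xs ≤ (f (x 0) - f xs) * ∏ t ∈ Finset.range T, (1 - αsl t)) := by
  have hA : (0:ℝ) < M + L := by linarith
  have hδnn : ∀ t, 0 ≤ f (x t) - f xs := fun t => sub_nonneg.mpr (hmin (x t))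
  have hδ0pos : 0 < f (x 0) - f xs := sub_pos.mpr hgap
  -- the basic per-step inequality
  have lemC : ∀ t : ℕ, ∀ α : ℝ, 0 ≤ α → α ≤ 1 →
      f (x (t+1)) - f xs ≤ (1 - α) * (f (x t) - f xs)
        - α * (1 - α) * (μ / 2) * ‖x t - xs‖ ^ 2
        + (M + L) / 6 * α ^ 3 * ‖x t - xs‖ ^ 3 := by
    intro t α hα0 hα1
    have hscb := hsc (x t) (1 - α) (by linarith) (by linarith)
    simp only [sub_sub_cancel, Nat.cast_ofNat] at hscb
    have hsb := step_bound hf hM (hstep t) ((1 - α) • (x t) + α • xs)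
    have hdist : ‖(1 - α) • (x t) + α • xs - x t‖ = α * ‖x t - xs‖ := by
      have he : (1 - α) • (x t) + α • xs - x t = -(α • (x t - xs)) := by module
      rw [he, norm_neg, norm_smul, Real.norm_eq_abs, abs_of_nonneg hα0]
    rw [hdist] at hsb
    have hexp : (α * ‖x t - xs‖) ^ 3 = α ^ 3 * ‖x t - xs‖ ^ 3 := by ring
    rw [hexp] at hsb
    nlinarith [hsb, hscb]
  have mono : ∀ t, f (x (t+1)) - f xs ≤ f (x t) - f xs := by
    intro t
    have := lemC t 0 le_rfl zero_le_one
    simpa using this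
  have hle0 : ∀ t, f (x t) ≤ f (x 0) := by
    intro t
    induction t with
    | zero => exact le_rfl
    | succ n ih => have := mono n; linarith
  have hrD : ∀ t, ‖x t - xs‖ ≤ D := fun t => hlev _ (hle0 t)
  -- facts about αlow
  have hsq_pos : 0 < 3 * μ / (4 * (M + L) * D) := by positivity
  have hαlow_pos : 0 < αlow := by
    rw [hαlow]; exact lt_min (by norm_num) (Real.sqrt_pos.mpr hsq_pos)
  have hαlow_half : αlow ≤ 1/2 := by rw [hαlow]; exact min_le_left _ _
  have hαlow_sq : αlow ^ 2 ≤ 3 * μ / (4 * (M + L) * D) := by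
    have h1 : αlow ≤ Real.sqrt (3 * μ / (4 * (M + L) * D)) := by
      rw [hαlow]; exact min_le_right _ _
    calc αlow ^ 2 ≤ Real.sqrt (3 * μ / (4 * (M + L) * D)) ^ 2 :=
          pow_le_pow_left₀ hαlow_pos.le h1 2
      _ = _ := Real.sq_sqrt hsq_pos.le
  have hb0 : 0 < 1 - αlow := by linarith
  have hb1 : 1 - αlow < 1 := by linarith
  -- slow linear rate
  have slow : ∀ t, f (x (t+1)) - f xs ≤ (1 - αlow) * (f (x t) - f xs) := by
    intro t
    have hC := lemC t αlow hαlow_pos.le (by linarith)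
    have hr0 : (0:ℝ) ≤ ‖x t - xs‖ := norm_nonneg _
    have hrD' := hrD t
    have h1 : ‖x t - xs‖ ^ 3 ≤ D * ‖x t - xs‖ ^ 2 := by nlinarith
    have h2 : (M + L) / 6 * αlow ^ 2 * D ≤ μ / 8 := by
      have h3 := mul_le_mul_of_nonneg_right hαlow_sq (by positivity : (0:ℝ) ≤ (M+L)*D/6)
      have h4 : 3 * μ / (4 * (M + L) * D) * ((M+L)*D/6) = μ / 8 := by
        field_simp; ring
      rw [h4] at h3
      nlinarith [h3]
    have key : (M + L) / 6 * αlow ^ 3 * ‖x t - xs‖ ^ 3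
        ≤ αlow * (1 - αlow) * (μ / 2) * ‖x t - xs‖ ^ 2 := by
      have s1 : (M + L) / 6 * αlow ^ 3 * ‖x t - xs‖ ^ 3
          ≤ (M + L) / 6 * αlow ^ 3 * (D * ‖x t - xs‖ ^ 2) := by
        apply mul_le_mul_of_nonneg_left h1 (by positivity)
      have s2 : (M + L) / 6 * αlow ^ 3 * (D * ‖x t - xs‖ ^ 2)
          ≤ (μ / 8) * (αlow * ‖x t - xs‖ ^ 2) := by
        have := mul_le_mul_of_nonneg_right h2
          (by positivity : (0:ℝ) ≤ αlow * ‖x t - xs‖ ^ 2)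
        nlinarith [this]
      have s3 : (μ / 8) * (αlow * ‖x t - xs‖ ^ 2)
          ≤ αlow * (1 - αlow) * (μ / 2) * ‖x t - xs‖ ^ 2 := by
        nlinarith [mul_nonneg hαlow_pos.le (sq_nonneg ‖x t - xs‖),
          mul_nonneg (mul_nonneg hαlow_pos.le hμ.le) (sq_nonneg ‖x t - xs‖)]
      linarith
    linarith
  have slowpow : ∀ t, f (x t) - f xs ≤ (1 - αlow) ^ t * (f (x 0) - f xs) := by
    intro t
    induction t with
    | zero => simp
    | succ n ih =>
      calc f (x (n+1)) - f xs ≤ (1 - αlow) * (f (x n) - f xs) := slow n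
        _ ≤ (1 - αlow) * ((1 - αlow) ^ n * (f (x 0) - f xs)) :=
            mul_le_mul_of_nonneg_left ih hb0.le
        _ = (1 - αlow) ^ (n+1) * (f (x 0) - f xs) := by ring
  -- κ facts
  have hκpos : ∀ t, 0 < κ t := by
    intro t
    rw [hκ]
    have h1 : 0 < μ ^ ((3:ℝ)/2) := Real.rpow_pos_of_pos hμ _
    have h2 : 0 < (1 - αlow) ^ ((t:ℝ)/2) := Real.rpow_pos_of_pos hb0 _
    have h3 : 0 < (f (x 0) - f xs) ^ ((1:ℝ)/2) := Real.rpow_pos_of_pos hδ0pos _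
    have h4 : 0 < Real.sqrt 2 := Real.sqrt_pos.mpr (by norm_num)
    exact mul_pos (mul_pos (div_pos (mul_pos hA h4) (by positivity)) h2) h3
  -- αsl basic facts
  have hαsl_mem : ∀ t, 0 < αsl t ∧ αsl t < 1 ∧ κ t * αsl t ^ 2 = 1 - αsl t := by
    intro t
    have hκt := hκpos t
    have hargnn : (0:ℝ) ≤ 1 + 4 * κ t := by linarith
    have hss : Real.sqrt (1 + 4 * κ t) ^ 2 = 1 + 4 * κ t := Real.sq_sqrt hargnn
    have hsgt1 : 1 < Real.sqrt (1 + 4 * κ t) := by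
      have := Real.sqrt_lt_sqrt (by norm_num : (0:ℝ) ≤ 1) (by linarith : (1:ℝ) < 1 + 4 * κ t)
      simpa using this
    have hlt : Real.sqrt (1 + 4 * κ t) < 1 + 2 * κ t := by
      have h5 : Real.sqrt (1 + 4 * κ t) < Real.sqrt ((1 + 2 * κ t) ^ 2) := by
        apply Real.sqrt_lt_sqrt hargnn
        nlinarith
      rwa [Real.sqrt_sq (by linarith)] at h5
    refine ⟨?_, ?_, ?_⟩
    · rw [hαsl]; exact div_pos (by linarith) (by linarith)
    · rw [hαsl, div_lt_one (by linarith)]; linarith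
    · rw [hαsl]
      have hne : (2 * κ t) ≠ 0 := by positivity
      have hss' : Real.sqrt (1 + κ t * 4) ^ 2 = 1 + κ t * 4 := Real.sq_sqrt (by linarith)
      field_simp
      nlinarith [hss, hss']
  -- main superlinear contraction
  have main_ineq : ∀ t : ℕ, f (x (t+1)) - f xs ≤ (1 - αsl t) * (f (x t) - f xs) := by
    intro t
    obtain ⟨hapos, halt1, hid⟩ := hαsl_mem t
    rcases eq_or_lt_of_le (hδnn t) with h0 | hpos
    · have hm := mono t
      have h1 : f (x (t+1)) - f xs ≤ 0 := by linarith
      have : (1 - αsl t) * (f (x t) - f xs) = 0 := by rw [← h0]; ring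
      linarith
    · -- positive gap case
      have hr2 : μ / 2 * ‖x t - xs‖ ^ 2 ≤ f (x t) - f xs := quad_growth hsc hmin (x t)
      have hr0 : (0:ℝ) ≤ ‖x t - xs‖ := norm_nonneg _
      -- key bound : (M+L)/6 * r <= kappa*(mu/2)
      have e1 : ((1 - αlow) : ℝ) ^ ((t:ℝ)/2) = Real.sqrt ((1 - αlow) ^ t) := by
        rw [show ((t:ℝ)/2) = (t:ℝ) * (1/2) by ring, Real.rpow_mul hb0.le,
          Real.rpow_natCast, ← Real.sqrt_eq_rpow]
      have e2 : (f (x 0) - f xs) ^ ((1:ℝ)/2) = Real.sqrt (f (x 0) - f xs) := by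
        rw [← Real.sqrt_eq_rpow]
      have e3 : μ ^ ((3:ℝ)/2) = μ * Real.sqrt μ := by
        rw [show ((3:ℝ)/2) = 1 + 1/2 by norm_num, Real.rpow_add hμ, Real.rpow_one,
          ← Real.sqrt_eq_rpow]
      have hμs : 0 < Real.sqrt μ := Real.sqrt_pos.mpr hμ
      have hbtnn : (0:ℝ) ≤ (1 - αlow) ^ t := by positivity
      have h6 : ‖x t - xs‖ ^ 2 ≤ 2 * ((1 - αlow) ^ t * (f (x 0) - f xs)) / μ := by
        rw [le_div_iff₀ hμ]
        nlinarith [hr2, slowpow t]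
      have h7 : (Real.sqrt 2 * Real.sqrt ((1 - αlow) ^ t) * Real.sqrt (f (x 0) - f xs)
          / Real.sqrt μ) ^ 2 = 2 * ((1 - αlow) ^ t * (f (x 0) - f xs)) / μ := by
        rw [div_pow, mul_pow, mul_pow, Real.sq_sqrt (by norm_num : (0:ℝ) ≤ 2),
          Real.sq_sqrt hbtnn, Real.sq_sqrt hδ0pos.le, Real.sq_sqrt hμ.le]
        ring
      have hrle : ‖x t - xs‖ ≤ Real.sqrt 2 * Real.sqrt ((1 - αlow) ^ t)
          * Real.sqrt (f (x 0) - f xs) / Real.sqrt μ := by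
        have h8 := Real.sqrt_le_sqrt (h6.trans_eq h7.symm)
        rwa [Real.sqrt_sq hr0, Real.sqrt_sq (by positivity)] at h8
      have heq : κ t * (μ/2) = (M + L) / 6 * (Real.sqrt 2 * Real.sqrt ((1 - αlow) ^ t)
          * Real.sqrt (f (x 0) - f xs) / Real.sqrt μ) := by
        rw [hκ, e1, e2, e3]
        have hμne : μ ≠ 0 := hμ.ne'
        have hμsne : Real.sqrt μ ≠ 0 := hμs.ne'
        field_simp
        ring
      have key1 : (M + L) / 6 * ‖x t - xs‖ ≤ κ t * (μ/2) := by
        rw [heq]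
        exact mul_le_mul_of_nonneg_left hrle (by positivity)
      -- combine
      have hCa := lemC t (αsl t) hapos.le halt1.le
      have hb1' : (M + L) / 6 * αsl t ^ 3 * ‖x t - xs‖ ^ 3
          ≤ (κ t * (μ/2)) * (αsl t ^ 3 * ‖x t - xs‖ ^ 2) := by
        have h10 := mul_le_mul_of_nonneg_right key1
          (by positivity : (0:ℝ) ≤ αsl t ^ 3 * ‖x t - xs‖ ^ 2)
        nlinarith [h10]
      have hb2' : (κ t * (μ/2)) * (αsl t ^ 3 * ‖x t - xs‖ ^ 2)
          = αsl t * (1 - αsl t) * (μ / 2) * ‖x t - xs‖ ^ 2 := by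
        have h9 : κ t * αsl t ^ 3 = (1 - αsl t) * αsl t := by
          nlinarith [hid]
        nlinarith [h9]
      linarith
  -- strict monotonicity of alphasl
  have hκdec : ∀ t, κ (t+1) < κ t := by
    intro t
    rw [hκ, hκ]
    have h3 : 0 < (f (x 0) - f xs) ^ ((1:ℝ)/2) := Real.rpow_pos_of_pos hδ0pos _
    have h4 : 0 < (M + L) * Real.sqrt 2 / (3 * μ ^ ((3:ℝ)/2)) := by
      have h4a := Real.rpow_pos_of_pos hμ ((3:ℝ)/2)
      have h5 : 0 < Real.sqrt 2 := Real.sqrt_pos.mpr (by norm_num)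
      positivity
    have h6 : ((1 - αlow) : ℝ) ^ (((t+1:ℕ):ℝ)/2) < (1 - αlow) ^ ((t:ℝ)/2) :=
      Real.rpow_lt_rpow_of_exponent_gt hb0 hb1 (by push_cast; linarith)
    exact mul_lt_mul_of_pos_right (mul_lt_mul_of_pos_left h6 h4) h3
  have form : ∀ c : ℝ, 0 < c →
      (-1 + Real.sqrt (1 + 4 * c)) / (2 * c) = 2 / (1 + Real.sqrt (1 + 4 * c)) := by
    intro c hc
    have hs : Real.sqrt (1 + 4 * c) ^ 2 = 1 + 4 * c := Real.sq_sqrt (by linarith)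
    have hspos : 0 < Real.sqrt (1 + 4 * c) := Real.sqrt_pos.mpr (by linarith)
    rw [div_eq_div_iff (by linarith) (by linarith)]
    nlinarith [hs]
  have hmono : ∀ t, αsl t < αsl (t+1) := by
    intro t
    have hs1 : Real.sqrt (1 + 4 * κ (t+1)) < Real.sqrt (1 + 4 * κ t) :=
      Real.sqrt_lt_sqrt (by linarith [hκpos (t+1)]) (by linarith [hκdec t])
    have hsnn : 0 ≤ Real.sqrt (1 + 4 * κ (t+1)) := Real.sqrt_nonneg _
    rw [hαsl, hαsl, form _ (hκpos t), form _ (hκpos (t+1))]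
    exact div_lt_div_of_pos_left (by norm_num) (by linarith) (by linarith)
  refine ⟨main_ineq, fun t => ⟨hmono t, (hαsl_mem (t+1)).2.1⟩, ?_⟩
  have prodbound : ∀ T : ℕ, f (x T) - f xs ≤
      (f (x 0) - f xs) * ∏ t ∈ Finset.range T, (1 - αsl t) := by
    intro T
    induction T with
    | zero => simp
    | succ n ih =>
      have h1 : 0 ≤ 1 - αsl n := by linarith [(hαsl_mem n).2.1]
      calc f (x (n+1)) - f xs ≤ (1 - αsl n) * (f (x n) - f xs) := main_ineq n
        _ ≤ (1 - αsl n) * ((f (x 0) - f xs) * ∏ t ∈ Finset.range n, (1 - αsl t)) :=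
            mul_le_mul_of_nonneg_left ih h1
        _ = (f (x 0) - f xs) * ∏ t ∈ Finset.range (n+1), (1 - αsl t) := by
            rw [Finset.prod_range_succ]; ring
  exact fun T _ => prodbound T
end
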